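/- In the Richelot iteration with real ordered roots, the sequences (a_n), (a'_n) defined by (a_{n+1}, a'_{n+1}) = (v_n, w_n) (and analogously for the other pairs per the interlacing inequalities) converge pairwise to common limits: lim a_n = lim a'_n, lim b_n = lim b'_n, lim c_n = lim c'_n. -/

import Mathlib

open Filter Topology

private lemma deriv_quad (a b x : ℝ) :
    deriv (fun x : ℝ => (x - a) * (x - b)) x = (x - b) + (x - a) := by
  have h := (((hasDerivAt_id x).sub_const a).mul ((hasDerivAt_id x).sub_const b)).deriv
  simp only [id] at h; rw [show (fun x : ℝ => (x - a) * (x - b)) = ((fun x => x - a) * fun x => x - b) from rfl, h]; ring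

/-- Convergence of the Richelot (genus-2 AGM) iteration: the six sequences
of branch points converge pairwise to common limits. -/
theorem richelot_iteration_converges
    (A A' B B' C C' : ℕ → ℝ)
    (horder : ∀ n, A n < A' n ∧ A' n < B n ∧ B n < B' n ∧ B' n < C n ∧ C n < C' n)
    -- the new values are roots of the Richelot brackets of the current quadratics
    (hroots : ∀ n,
      let P : ℝ → ℝ := fun x => (x - A n) * (x - A' n)
      let Q : ℝ → ℝ := fun x => (x - B n) * (x - B' n)
      let R : ℝ → ℝ := fun x => (x - C n) * (x - C' n)
      let U : ℝ → ℝ := fun x => deriv Q x * R x - deriv R x * Q x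
      let V : ℝ → ℝ := fun x => deriv R x * P x - deriv P x * R x
      let W : ℝ → ℝ := fun x => deriv P x * Q x - deriv Q x * P x
      V (A (n + 1)) = 0 ∧ W (A' (n + 1)) = 0 ∧ W (B (n + 1)) = 0 ∧
      U (B' (n + 1)) = 0 ∧ U (C (n + 1)) = 0 ∧ V (C' (n + 1)) = 0)
    -- interlacing: each new pair is nested inside the old one
    (hnest : ∀ n, A n ≤ A (n + 1) ∧ A' (n + 1) ≤ A' n ∧
      B n ≤ B (n + 1) ∧ B' (n + 1) ≤ B' n ∧
      C n ≤ C (n + 1) ∧ C' (n + 1) ≤ C' n) :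
    ∃ la lb lc : ℝ,
      Tendsto A atTop (𝓝 la) ∧ Tendsto A' atTop (𝓝 la) ∧
      Tendsto B atTop (𝓝 lb) ∧ Tendsto B' atTop (𝓝 lb) ∧
      Tendsto C atTop (𝓝 lc) ∧ Tendsto C' atTop (𝓝 lc) := by
  have hAmono : Monotone A := monotone_nat_of_le_succ fun n => (hnest n).1
  have hA'anti : Antitone A' := antitone_nat_of_succ_le fun n => (hnest n).2.1
  have hBmono : Monotone B := monotone_nat_of_le_succ fun n => (hnest n).2.2.1
  have hB'anti : Antitone B' := antitone_nat_of_succ_le fun n => (hnest n).2.2.2.1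
  have hCmono : Monotone C := monotone_nat_of_le_succ fun n => (hnest n).2.2.2.2.1
  have hC'anti : Antitone C' := antitone_nat_of_succ_le fun n => (hnest n).2.2.2.2.2
  have hbA : BddAbove (Set.range A) := by
    refine ⟨A' 0, ?_⟩; rintro _ ⟨n, rfl⟩
    exact (horder n).1.le.trans (hA'anti (Nat.zero_le n))
  have hbA' : BddBelow (Set.range A') := by
    refine ⟨A 0, ?_⟩; rintro _ ⟨n, rfl⟩
    exact (hAmono (Nat.zero_le n)).trans (horder n).1.le
  have hbB : BddAbove (Set.range B) := by
    refine ⟨B' 0, ?_⟩; rintro _ ⟨n, rfl⟩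
    exact (horder n).2.2.1.le.trans (hB'anti (Nat.zero_le n))
  have hbB' : BddBelow (Set.range B') := by
    refine ⟨B 0, ?_⟩; rintro _ ⟨n, rfl⟩
    exact (hBmono (Nat.zero_le n)).trans (horder n).2.2.1.le
  have hbC : BddAbove (Set.range C) := by
    refine ⟨C' 0, ?_⟩; rintro _ ⟨n, rfl⟩
    exact (horder n).2.2.2.2.le.trans (hC'anti (Nat.zero_le n))
  have hbC' : BddBelow (Set.range C') := by
    refine ⟨C 0, ?_⟩; rintro _ ⟨n, rfl⟩
    exact (hCmono (Nat.zero_le n)).trans (horder n).2.2.2.2.le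
  set la := ⨆ n, A n with hla_def
  set la' := ⨅ n, A' n with hla'_def
  set lb := ⨆ n, B n with hlb_def
  set lb' := ⨅ n, B' n with hlb'_def
  set lc := ⨆ n, C n with hlc_def
  set lc' := ⨅ n, C' n with hlc'_def
  have hla : Tendsto A atTop (𝓝 la) := tendsto_atTop_ciSup hAmono hbA
  have hla' : Tendsto A' atTop (𝓝 la') := tendsto_atTop_ciInf hA'anti hbA'
  have hlb : Tendsto B atTop (𝓝 lb) := tendsto_atTop_ciSup hBmono hbB
  have hlb' : Tendsto B' atTop (𝓝 lb') := tendsto_atTop_ciInf hB'anti hbB'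
  have hlc : Tendsto C atTop (𝓝 lc) := tendsto_atTop_ciSup hCmono hbC
  have hlc' : Tendsto C' atTop (𝓝 lc') := tendsto_atTop_ciInf hC'anti hbC'
  -- ordering of the limits
  have h1 : la ≤ la' := le_of_tendsto_of_tendsto' hla hla' fun n => (horder n).1.le
  have h3 : lb ≤ lb' := le_of_tendsto_of_tendsto' hlb hlb' fun n => (horder n).2.2.1.le
  have h5 : lc ≤ lc' := le_of_tendsto_of_tendsto' hlc hlc' fun n => (horder n).2.2.2.2.le
  have h2 : la' < lb :=
    lt_of_le_of_lt (ciInf_le hbA' 0) ((horder 0).2.1.trans_le (le_ciSup hbB 0))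
  have h4 : lb' < lc :=
    lt_of_le_of_lt (ciInf_le hbB' 0) ((horder 0).2.2.2.1.trans_le (le_ciSup hbC 0))
  -- shifted limits
  have hA1 : Tendsto (fun n => A (n + 1)) atTop (𝓝 la) := hla.comp (tendsto_add_atTop_nat 1)
  have hB'1 : Tendsto (fun n => B' (n + 1)) atTop (𝓝 lb') := hlb'.comp (tendsto_add_atTop_nat 1)
  have hC'1 : Tendsto (fun n => C' (n + 1)) atTop (𝓝 lc') := hlc'.comp (tendsto_add_atTop_nat 1)
  -- (1) pass V (A (n+1)) = 0 to the limit
  have keyA : ∀ n, ((A (n+1) - C' n) + (A (n+1) - C n)) * ((A (n+1) - A n) * (A (n+1) - A' n))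
      - ((A (n+1) - A' n) + (A (n+1) - A n)) * ((A (n+1) - C n) * (A (n+1) - C' n)) = 0 := by
    intro n
    have h := (hroots n).1
    simpa only [deriv_quad] using h
  have limA : ((la - lc') + (la - lc)) * ((la - la) * (la - la'))
      - ((la - la') + (la - la)) * ((la - lc) * (la - lc')) = 0 := by
    have hf : Tendsto (fun n => ((A (n+1) - C' n) + (A (n+1) - C n)) * ((A (n+1) - A n) * (A (n+1) - A' n))
        - ((A (n+1) - A' n) + (A (n+1) - A n)) * ((A (n+1) - C n) * (A (n+1) - C' n))) atTop
        (𝓝 (((la - lc') + (la - lc)) * ((la - la) * (la - la'))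
          - ((la - la') + (la - la)) * ((la - lc) * (la - lc')))) :=
      (((hA1.sub hlc').add (hA1.sub hlc)).mul
        ((hA1.sub hla).mul (hA1.sub hla'))).sub
        (((hA1.sub hla').add (hA1.sub hla)).mul ((hA1.sub hlc).mul (hA1.sub hlc')))
    exact tendsto_nhds_unique hf (by simpa only [keyA] using tendsto_const_nhds)
  -- (2) pass U (B' (n+1)) = 0 to the limit
  have keyB : ∀ n, ((B' (n+1) - B' n) + (B' (n+1) - B n)) * ((B' (n+1) - C n) * (B' (n+1) - C' n))
      - ((B' (n+1) - C' n) + (B' (n+1) - C n)) * ((B' (n+1) - B n) * (B' (n+1) - B' n)) = 0 := by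
    intro n
    have h := (hroots n).2.2.2.1
    simpa only [deriv_quad] using h
  have limB : ((lb' - lb') + (lb' - lb)) * ((lb' - lc) * (lb' - lc'))
      - ((lb' - lc') + (lb' - lc)) * ((lb' - lb) * (lb' - lb')) = 0 := by
    have hf : Tendsto (fun n => ((B' (n+1) - B' n) + (B' (n+1) - B n)) * ((B' (n+1) - C n) * (B' (n+1) - C' n))
        - ((B' (n+1) - C' n) + (B' (n+1) - C n)) * ((B' (n+1) - B n) * (B' (n+1) - B' n))) atTop
        (𝓝 (((lb' - lb') + (lb' - lb)) * ((lb' - lc) * (lb' - lc'))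
          - ((lb' - lc') + (lb' - lc)) * ((lb' - lb) * (lb' - lb')))) :=
      (((hB'1.sub hlb').add (hB'1.sub hlb)).mul
        ((hB'1.sub hlc).mul (hB'1.sub hlc'))).sub
        (((hB'1.sub hlc').add (hB'1.sub hlc)).mul ((hB'1.sub hlb).mul (hB'1.sub hlb')))
    exact tendsto_nhds_unique hf (by simpa only [keyB] using tendsto_const_nhds)
  -- (3) pass V (C' (n+1)) = 0 to the limit
  have keyC : ∀ n, ((C' (n+1) - C' n) + (C' (n+1) - C n)) * ((C' (n+1) - A n) * (C' (n+1) - A' n))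
      - ((C' (n+1) - A' n) + (C' (n+1) - A n)) * ((C' (n+1) - C n) * (C' (n+1) - C' n)) = 0 := by
    intro n
    have h := (hroots n).2.2.2.2.2
    simpa only [deriv_quad] using h
  have limC : ((lc' - lc') + (lc' - lc)) * ((lc' - la) * (lc' - la'))
      - ((lc' - la') + (lc' - la)) * ((lc' - lc) * (lc' - lc')) = 0 := by
    have hf : Tendsto (fun n => ((C' (n+1) - C' n) + (C' (n+1) - C n)) * ((C' (n+1) - A n) * (C' (n+1) - A' n))
        - ((C' (n+1) - A' n) + (C' (n+1) - A n)) * ((C' (n+1) - C n) * (C' (n+1) - C' n))) atTop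
        (𝓝 (((lc' - lc') + (lc' - lc)) * ((lc' - la) * (lc' - la'))
          - ((lc' - la') + (lc' - la)) * ((lc' - lc) * (lc' - lc')))) :=
      (((hC'1.sub hlc').add (hC'1.sub hlc)).mul
        ((hC'1.sub hla).mul (hC'1.sub hla'))).sub
        (((hC'1.sub hla').add (hC'1.sub hla)).mul ((hC'1.sub hlc).mul (hC'1.sub hlc')))
    exact tendsto_nhds_unique hf (by simpa only [keyC] using tendsto_const_nhds)
  -- extract the pairwise equalities
  have eA : la' = la := by
    have pA : (la' - la) * ((lc - la) * (lc' - la)) = 0 := by linear_combination limA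
    rcases mul_eq_zero.mp pA with h | h
    · linarith
    · exfalso
      have hp : 0 < (lc - la) * (lc' - la) :=
        mul_pos (by linarith) (by linarith)
      exact hp.ne' h
  have eB : lb' = lb := by
    have pB : (lb' - lb) * ((lc - lb') * (lc' - lb')) = 0 := by linear_combination limB
    rcases mul_eq_zero.mp pB with h | h
    · linarith
    · exfalso
      have hp : 0 < (lc - lb') * (lc' - lb') :=
        mul_pos (by linarith) (by linarith)
      exact hp.ne' h
  have eC : lc' = lc := by
    have pC : (lc' - lc) * ((lc' - la) * (lc' - la')) = 0 := by linear_combination limC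
    rcases mul_eq_zero.mp pC with h | h
    · linarith
    · exfalso
      have hp : 0 < (lc' - la) * (lc' - la') :=
        mul_pos (by linarith) (by linarith)
      exact hp.ne' h
  exact ⟨la, lb, lc, hla, eA ▸ hla', hlb, eB ▸ hlb', hlc, eC ▸ hlc'⟩
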